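/- Let n ≥ 3 be an integer and let h : ℝ → ℝ be continuously differentiable with h(r) > 0 for all r, h'(0) = 0, h'(r) > 0 for all r > 0, and h'(r) < 0 for all r < 0. If R : [0, ∞) → ℝ solves R'(t) = -(n-1)·h'(R(t))/h(R(t)) with R(0) = a ≠ 0, then R(t) → 0 as t → ∞. -/

import Mathlib

open Set Filter

private lemma aux_conv (c : ℝ) (hc : 0 < c) (h : ℝ → ℝ) (hC1 : ContDiff ℝ 1 h)
    (hpos : ∀ r : ℝ, 0 < h r) (hd0 : deriv h 0 = 0)
    (hdpos : ∀ r : ℝ, 0 < r → 0 < deriv h r)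
    (hdneg : ∀ r : ℝ, r < 0 → deriv h r < 0)
    (a : ℝ) (ha : 0 < a) (R : ℝ → ℝ) (hR0 : R 0 = a)
    (hR : ∀ t : ℝ, 0 ≤ t → HasDerivAt R (-c * deriv h (R t) / h (R t)) t) :
    Filter.Tendsto R Filter.atTop (nhds 0) := by
  have hdc : Continuous (deriv h) := hC1.continuous_deriv le_rfl
  have hRcont : ContinuousOn R (Ici 0) := fun t ht =>
    (hR t ht).continuousAt.continuousWithinAt
  have hderiv : ∀ t : ℝ, 0 ≤ t → deriv R t = -c * deriv h (R t) / h (R t) :=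
    fun t ht => (hR t ht).deriv
  -- Step B : R stays nonnegative
  have hnonneg : ∀ t : ℝ, 0 ≤ t → 0 ≤ R t := by
    intro t ht
    by_contra hlt
    push_neg at hlt
    set S := Icc (0:ℝ) t ∩ R ⁻¹' Ici 0 with hSdef
    have hScl : IsClosed S :=
      (hRcont.mono (Icc_subset_Ici_self)).preimage_isClosed_of_isClosed
        isClosed_Icc isClosed_Ici
    have hSne : S.Nonempty := ⟨0, ⟨le_rfl, ht⟩, by simp [hR0, ha.le]⟩
    have hSbdd : BddAbove S := ⟨t, fun u hu => hu.1.2⟩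
    set s := sSup S with hsdef
    have hsS : s ∈ S := hScl.csSup_mem hSne hSbdd
    have hs0 : 0 ≤ s := hsS.1.1
    have hst : s ≤ t := hsS.1.2
    have hRs : 0 ≤ R s := hsS.2
    have hstlt : s < t := lt_of_le_of_ne hst (fun he => absurd hRs (by rw [he]; exact not_le.2 hlt))
    have hneg : ∀ u ∈ Ioc s t, R u < 0 := by
      intro u hu
      by_contra hge
      push_neg at hge
      exact absurd (le_csSup hSbdd ⟨⟨hs0.trans hu.1.le, hu.2⟩, hge⟩) (not_le.2 hu.1)
    have hmono : StrictMonoOn R (Icc s t) := by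
      apply strictMonoOn_of_deriv_pos (convex_Icc s t)
        (hRcont.mono (fun x hx => hs0.trans hx.1))
      intro x hx
      rw [interior_Icc] at hx
      have hx0 : (0:ℝ) ≤ x := hs0.trans hx.1.le
      rw [hderiv x hx0]
      have hd : deriv h (R x) < 0 := hdneg _ (hneg x ⟨hx.1, hx.2.le⟩)
      have hh := hpos (R x)
      have h1 : 0 < -c * deriv h (R x) := by nlinarith
      exact div_pos h1 hh
    have := hmono ⟨le_rfl, hst⟩ ⟨hst, le_rfl⟩ hstlt
    linarith
  -- Step C : R stays at most a
  have hlea : ∀ t : ℝ, 0 ≤ t → R t ≤ a := by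
    intro t ht
    by_contra hlt
    push_neg at hlt
    set S := Icc (0:ℝ) t ∩ R ⁻¹' Iic a with hSdef
    have hScl : IsClosed S :=
      (hRcont.mono (Icc_subset_Ici_self)).preimage_isClosed_of_isClosed
        isClosed_Icc isClosed_Iic
    have hSne : S.Nonempty := ⟨0, ⟨le_rfl, ht⟩, by simp [hR0]⟩
    have hSbdd : BddAbove S := ⟨t, fun u hu => hu.1.2⟩
    set s := sSup S with hsdef
    have hsS : s ∈ S := hScl.csSup_mem hSne hSbdd
    have hs0 : 0 ≤ s := hsS.1.1
    have hst : s ≤ t := hsS.1.2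
    have hRs : R s ≤ a := hsS.2
    have hstlt : s < t := lt_of_le_of_ne hst (fun he => absurd hRs (by rw [he]; exact not_le.2 hlt))
    have hbig : ∀ u ∈ Ioc s t, a < R u := by
      intro u hu
      by_contra hge
      push_neg at hge
      exact absurd (le_csSup hSbdd ⟨⟨hs0.trans hu.1.le, hu.2⟩, hge⟩) (not_le.2 hu.1)
    have hmono : StrictAntiOn R (Icc s t) := by
      apply strictAntiOn_of_deriv_neg (convex_Icc s t)
        (hRcont.mono (fun x hx => hs0.trans hx.1))
      intro x hx
      rw [interior_Icc] at hx
      have hx0 : (0:ℝ) ≤ x := hs0.trans hx.1.le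
      rw [hderiv x hx0]
      have hd : 0 < deriv h (R x) := hdpos _ (ha.trans (hbig x ⟨hx.1, hx.2.le⟩))
      have hh := hpos (R x)
      have h1 : -c * deriv h (R x) < 0 := by nlinarith
      exact div_neg_of_neg_of_pos h1 hh
    have := hmono ⟨le_rfl, hst⟩ ⟨hst, le_rfl⟩ hstlt
    linarith
  -- deriv h (R t) ≥ 0 for t ≥ 0
  have hdRnonneg : ∀ t : ℝ, 0 ≤ t → 0 ≤ deriv h (R t) := by
    intro t ht
    rcases (hnonneg t ht).eq_or_lt with he | hl
    · rw [← he, hd0]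
    · exact (hdpos _ hl).le
  -- Step D : R antitone on Ici 0
  have hanti : AntitoneOn R (Ici 0) := by
    apply antitoneOn_of_deriv_nonpos (convex_Ici 0) hRcont
    · intro x hx
      rw [interior_Ici] at hx
      exact (hR x hx.le).differentiableAt.differentiableWithinAt
    · intro x hx
      rw [interior_Ici] at hx
      rw [hderiv x hx.le]
      apply div_nonpos_of_nonpos_of_nonneg
      · have := hdRnonneg x hx.le
        nlinarith
      · exact (hpos (R x)).le
  -- Step E : convergence to the infimum
  set Q : ℝ → ℝ := fun t => R (max t 0) with hQdef
  have hQanti : Antitone Q := fun t u htu =>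
    hanti (le_max_right t 0) (le_max_right u 0) (max_le_max htu le_rfl)
  have hQbdd : BddBelow (range Q) := by
    refine ⟨0, ?_⟩
    rintro _ ⟨t, rfl⟩
    exact hnonneg _ (le_max_right t 0)
  set L := ⨅ t, Q t with hLdef
  have hQtend : Tendsto Q atTop (nhds L) := tendsto_atTop_ciInf hQanti hQbdd
  have hL0 : 0 ≤ L := le_ciInf fun t => hnonneg _ (le_max_right t 0)
  have hLle : ∀ t : ℝ, 0 ≤ t → L ≤ R t := by
    intro t ht
    have h1 : L ≤ Q t := ciInf_le hQbdd t
    have h2 : Q t = R t := by simp [hQdef, max_eq_left ht]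
    rwa [h2] at h1
  have hLa : L ≤ a := by
    have := hLle 0 le_rfl
    rwa [hR0] at this
  -- Step F : L = 0
  have hLzero : L = 0 := by
    by_contra hne
    have hLpos : 0 < L := lt_of_le_of_ne hL0 (Ne.symm hne)
    set g : ℝ → ℝ := fun r => c * deriv h r / h r with hgdef
    have hgcont : ContinuousOn g (Icc L a) :=
      ((continuous_const.mul hdc).div hC1.continuous fun r => (hpos r).ne').continuousOn
    obtain ⟨r₀, hr₀K, hmin⟩ := isCompact_Icc.exists_isMinOn ⟨L, le_rfl, hLa⟩ hgcont
    set m := g r₀ with hmdef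
    have hm : 0 < m := by
      have h1 : 0 < deriv h r₀ := hdpos _ (hLpos.trans_le hr₀K.1)
      have h2 := hpos r₀
      exact div_pos (by positivity) h2
    have hle : ∀ t : ℝ, 0 ≤ t → deriv R t ≤ -m := by
      intro t ht
      have hK : R t ∈ Icc L a := ⟨hLle t ht, hlea t ht⟩
      have := hmin hK
      rw [hderiv t ht]
      have : m ≤ g (R t) := this
      rw [hgdef] at this
      have heq : -c * deriv h (R t) / h (R t) = -(c * deriv h (R t) / h (R t)) := by ring
      rw [heq]
      linarith
    set φ : ℝ → ℝ := fun t => R t + m * t with hφdef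
    have hφd : ∀ t : ℝ, 0 ≤ t → HasDerivAt φ (deriv R t + m) t := by
      intro t ht
      have h1 : HasDerivAt (fun t : ℝ => m * t) m t := by
        simpa using (hasDerivAt_id t).const_mul m
      have := ((hR t ht).add h1)
      rw [hderiv t ht]
      exact this
    have hφanti : AntitoneOn φ (Ici 0) := by
      apply antitoneOn_of_deriv_nonpos (convex_Ici 0)
      · exact hRcont.add (continuous_const.mul continuous_id).continuousOn
      · intro x hx
        rw [interior_Ici] at hx
        exact (hφd x hx.le).differentiableAt.differentiableWithinAt
      · intro x hx
        rw [interior_Ici] at hx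
        rw [(hφd x hx.le).deriv]
        have := hle x hx.le
        linarith
    set T : ℝ := (a - L) / m + 1 with hTdef
    have hT0 : (0:ℝ) ≤ T := by
      rw [hTdef]
      have : 0 ≤ (a - L) / m := div_nonneg (by linarith) hm.le
      linarith
    have h1 : R T + m * T ≤ a := by
      have := hφanti (mem_Ici.mpr le_rfl) hT0 hT0
      simpa [hφdef, hR0] using this
    have h3 : m * T = (a - L) + m := by
      rw [hTdef]; field_simp
    have h4 := hLle T hT0
    rw [h3] at h1
    linarith
  -- conclude
  have : Tendsto Q atTop (nhds 0) := hLzero ▸ hQtend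
  apply this.congr'
  filter_upwards [eventually_ge_atTop (0:ℝ)] with t ht
  simp [hQdef, max_eq_left ht]

/-- any global solution of the barrier ODE `R' = -(n-1)·h'(R)/h(R)` on `[0, ∞)`
with `R(0) = a ≠ 0` tends to `0` as `t → ∞`. -/
theorem stmt_1 (n : ℕ) (hn : 3 ≤ n) (h : ℝ → ℝ) (hC1 : ContDiff ℝ 1 h)
    (hpos : ∀ r : ℝ, 0 < h r) (hd0 : deriv h 0 = 0)
    (hdpos : ∀ r : ℝ, 0 < r → 0 < deriv h r)
    (hdneg : ∀ r : ℝ, r < 0 → deriv h r < 0)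
    (a : ℝ) (ha : a ≠ 0) (R : ℝ → ℝ) (hR0 : R 0 = a)
    (hR : ∀ t : ℝ, 0 ≤ t →
      HasDerivAt R (-(n - 1 : ℝ) * deriv h (R t) / h (R t)) t) :
    Filter.Tendsto R Filter.atTop (nhds 0) := by
  have hn3 : (3:ℝ) ≤ (n:ℝ) := by exact_mod_cast hn
  have hc : (0:ℝ) < (n:ℝ) - 1 := by linarith
  rcases ha.lt_or_gt with haneg | hapos
  · -- a < 0 : reflect
    set h2 : ℝ → ℝ := fun r => h (-r) with hh2
    have hC1₂ : ContDiff ℝ 1 h2 := hC1.comp (contDiff_id.neg)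
    have hderiv2 : ∀ x : ℝ, deriv h2 x = -deriv h (-x) := by
      intro x
      have hout : HasDerivAt h (deriv h (-x)) (-x) :=
        (hC1.differentiable one_ne_zero (-x)).hasDerivAt
      have hin : HasDerivAt (fun x : ℝ => -x) (-1) x := hasDerivAt_neg x
      have H : HasDerivAt h2 (deriv h (-x) * (-1)) x := HasDerivAt.comp x hout hin
      rw [H.deriv]; ring
    have hpos2 : ∀ r : ℝ, 0 < h2 r := fun r => hpos (-r)
    have hd02 : deriv h2 0 = 0 := by rw [hderiv2]; simp [hd0]
    have hdpos2 : ∀ r : ℝ, 0 < r → 0 < deriv h2 r := by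
      intro r hr
      rw [hderiv2]
      have := hdneg (-r) (by linarith)
      linarith
    have hdneg2 : ∀ r : ℝ, r < 0 → deriv h2 r < 0 := by
      intro r hr
      rw [hderiv2]
      have := hdpos (-r) (by linarith)
      linarith
    have hR2 : ∀ t : ℝ, 0 ≤ t →
        HasDerivAt (fun t => -R t) (-((n:ℝ)-1) * deriv h2 (-R t) / h2 (-R t)) t := by
      intro t ht
      have := (hR t ht).neg
      refine this.congr_deriv ?_
      rw [hderiv2]
      simp only [hh2, neg_neg]
      ring
    have := aux_conv ((n:ℝ)-1) hc h2 hC1₂ hpos2 hd02 hdpos2 hdneg2 (-a)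
      (by linarith) (fun t => -R t) (by simp [hR0]) hR2
    have hfin := this.neg
    simpa using hfin
  · exact aux_conv ((n:ℝ)-1) hc h hC1 hpos hd0 hdpos hdneg a hapos R hR0 hR
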